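/- Suppose there is a path i = v_0, v_1, …, v_{L-1}, v_L = j in the graph with deg(v_0) = d and deg(v_k) ≤ 3 for 1 ≤ k ≤ L−1. Then E[(S^L ε)_i^2] ≥ (d+1)^{-2}·4^{2−2L}. -/

import Mathlib

open Matrix MeasureTheory

/-- The row-normalized adjacency matrix with self-loops `S = D̃⁻¹Ã`. -/
noncomputable def Smat {n : ℕ} (G : SimpleGraph (Fin n)) [DecidableRel G.Adj] :
    Matrix (Fin n) (Fin n) ℝ :=
  Matrix.of fun i j => ((G.adjMatrix ℝ + 1) i j) / ((G.degree i : ℝ) + 1)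

lemma Smat_nonneg {n : ℕ} (G : SimpleGraph (Fin n)) [DecidableRel G.Adj] (a b : Fin n) :
    0 ≤ Smat G a b := by
  unfold Smat
  simp only [Matrix.of_apply, Matrix.add_apply, Matrix.one_apply, SimpleGraph.adjMatrix_apply]
  apply div_nonneg
  · split_ifs <;> norm_num
  · positivity

lemma Smat_pow_nonneg {n : ℕ} (G : SimpleGraph (Fin n)) [DecidableRel G.Adj] (L : ℕ)
    (a b : Fin n) : 0 ≤ (Smat G ^ L) a b := by
  induction L generalizing a b with
  | zero => simp [Matrix.one_apply]; split_ifs <;> norm_num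
  | succ m ih =>
      rw [pow_succ, Matrix.mul_apply]
      exact Finset.sum_nonneg fun k _ => mul_nonneg (ih a k) (Smat_nonneg G k b)

lemma Smat_adj {n : ℕ} (G : SimpleGraph (Fin n)) [DecidableRel G.Adj] {a b : Fin n}
    (h : G.Adj a b) : Smat G a b = 1 / ((G.degree a : ℝ) + 1) := by
  unfold Smat
  simp [Matrix.add_apply, Matrix.one_apply, h, h.ne]

/-- the entry of a matrix power dominates the product of entries along any walk -/
lemma walk_prod_le {n : ℕ} (G : SimpleGraph (Fin n)) [DecidableRel G.Adj] :
    ∀ {a b : Fin n} (q : G.Walk a b),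
      (q.darts.map fun e => Smat G e.fst e.snd).prod ≤ (Smat G ^ q.length) a b := by
  intro a b q
  induction q with
  | nil => simp [Matrix.one_apply]
  | @cons u v w h q ih =>
      simp only [SimpleGraph.Walk.darts_cons, List.map_cons, List.prod_cons,
        SimpleGraph.Walk.length_cons]
      rw [pow_succ', Matrix.mul_apply]
      calc Smat G u v * (q.darts.map fun e => Smat G e.fst e.snd).prod
          ≤ Smat G u v * (Smat G ^ q.length) v w := by
            apply mul_le_mul_of_nonneg_left ih (Smat_nonneg G u v)
        _ ≤ ∑ k, Smat G u k * (Smat G ^ q.length) k w := by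
            apply Finset.single_le_sum (f := fun k => Smat G u k * (Smat G ^ q.length) k w)
              (fun k _ => mul_nonneg (Smat_nonneg G u k) (Smat_pow_nonneg G _ k w))
              (Finset.mem_univ v)

lemma list_prod_ge {c : ℝ} (hc : 0 ≤ c) :
    ∀ (l : List ℝ), (∀ x ∈ l, c ≤ x) → c ^ l.length ≤ l.prod := by
  intro l
  induction l with
  | nil => simp
  | cons x xs ih =>
      intro hmem
      simp only [List.length_cons, List.prod_cons, pow_succ]
      rw [mul_comm]
      exact mul_le_mul (hmem x (by simp)) (ih fun y hy => hmem y (by simp [hy]))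
        (pow_nonneg hc _) ((hc.trans (hmem x (by simp))))

/-- If there is a path of length `L` from `i` (of degree `d`) to `j` whose interior
vertices all have degree at most 3, then `E[(S^L ε)ᵢ²] ≥ (d+1)⁻²·4^{2−2L}`
(Proposition 2). -/
theorem stmt17 {n : ℕ} (G : SimpleGraph (Fin n)) [DecidableRel G.Adj]
    {Ω : Type*} [MeasurableSpace Ω] (μ : MeasureTheory.Measure Ω)
    [MeasureTheory.IsProbabilityMeasure μ] (ε : Fin n → Ω → ℝ)
    (hint : ∀ i : Fin n, MeasureTheory.Integrable (ε i) μ)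
    (hint2 : ∀ i j : Fin n, MeasureTheory.Integrable (fun ω => ε i ω * ε j ω) μ)
    (hmean : ∀ i : Fin n, ∫ ω, ε i ω ∂μ = 0)
    (hcov : ∀ i j : Fin n, ∫ ω, ε i ω * ε j ω ∂μ = if i = j then 1 else 0)
    (L : ℕ) (hL : 1 ≤ L) (i j : Fin n) (d : ℕ) (hd : G.degree i = d)
    (p : G.Walk i j) (hpath : p.IsPath) (hlen : p.length = L)
    (hdeg : ∀ v ∈ p.support, v ≠ i → v ≠ j → G.degree v ≤ 3) :
    ((d : ℝ) + 1) ^ (-2 : ℤ) * (4 : ℝ) ^ (2 - 2 * (L : ℤ))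
      ≤ ∫ ω, ((Smat G ^ L).mulVec (fun k => ε k ω) i) ^ 2 ∂μ := by
  set M := Smat G ^ L with hM
  -- Step 1: compute the integral
  have key : ∫ ω, (M.mulVec (fun k => ε k ω) i) ^ 2 ∂μ = ∑ k, (M i k) ^ 2 := by
    have hexp : ∀ ω, (M.mulVec (fun k => ε k ω) i) ^ 2
        = ∑ k, ∑ l, (M i k * M i l) * (ε k ω * ε l ω) := by
      intro ω
      simp only [Matrix.mulVec, dotProduct, sq, Finset.sum_mul_sum]
      congr 1; funext k; congr 1; funext l; ring
    simp_rw [hexp]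
    rw [integral_finset_sum _ fun k _ => integrable_finset_sum _
      fun l _ => (hint2 k l).const_mul _]
    have : ∀ k, ∫ ω, ∑ l, (M i k * M i l) * (ε k ω * ε l ω) ∂μ = (M i k) ^ 2 := by
      intro k
      rw [integral_finset_sum _ fun l _ => (hint2 k l).const_mul _]
      have : ∀ l, ∫ ω, (M i k * M i l) * (ε k ω * ε l ω) ∂μ
          = (M i k * M i l) * (if k = l then 1 else 0) := by
        intro l; rw [MeasureTheory.integral_const_mul, hcov]
      simp_rw [this, mul_ite, mul_one, mul_zero, Finset.sum_ite_eq, Finset.mem_univ, if_pos, sq]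
    simp_rw [this]
  rw [key]
  -- Step 2: the single term bound
  have hbound : (1 / ((d : ℝ) + 1)) * (1 / 4 : ℝ) ^ (L - 1) ≤ M i j := by
    cases p with
    | nil => simp at hlen; omega
    | @cons _ v _ hadj q =>
        have hq : q.length = L - 1 := by
          simp only [SimpleGraph.Walk.length_cons] at hlen; omega
        have hLq : L = q.length + 1 := by omega
        have hpath' := (SimpleGraph.Walk.cons_isPath_iff _ _).mp hpath
        calc (1 / ((d : ℝ) + 1)) * (1 / 4 : ℝ) ^ (L - 1)
            ≤ Smat G i v * (q.darts.map fun e => Smat G e.fst e.snd).prod := by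
              apply mul_le_mul
              · rw [Smat_adj G hadj, hd]
              · rw [← hq, ← q.length_darts, ← List.length_map
                  (fun e => Smat G e.fst e.snd)]
                apply list_prod_ge (by norm_num)
                intro x hx
                obtain ⟨e, he, rfl⟩ := List.mem_map.mp hx
                -- e.fst is an interior vertex
                have hfst_mem : e.fst ∈ q.support :=
                  SimpleGraph.Walk.dart_fst_mem_support_of_mem_darts q he
                have hfst_ne_i : e.fst ≠ i := fun h => hpath'.2 (h ▸ hfst_mem)
                have hfst_ne_j : e.fst ≠ j := by
                  intro h
                  have h1 : e.fst ∈ q.support.dropLast := by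
                    rw [← SimpleGraph.Walk.map_fst_darts]
                    exact List.mem_map.mpr ⟨e, he, rfl⟩
                  have h2 := List.dropLast_append_getLast q.support_ne_nil
                  rw [q.getLast_support] at h2
                  have h3 : q.support.Nodup := hpath'.1.support_nodup
                  rw [← h2] at h3
                  rcases List.nodup_append.mp h3 with ⟨_, _, hdisj⟩
                  exact hdisj _ h1 _ (List.mem_singleton_self j) h
                have hdeg3 : G.degree e.fst ≤ 3 :=
                  hdeg e.fst (by simp [hfst_mem]) hfst_ne_i hfst_ne_j
                rw [Smat_adj G e.adj]
                apply div_le_div_of_nonneg_left (by norm_num) (by positivity)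
                have : (G.degree e.fst : ℝ) ≤ 3 := by exact_mod_cast hdeg3
                linarith
              · positivity
              · exact Smat_nonneg G i v
          _ ≤ M i j := by
              rw [hM, hLq]
              have := walk_prod_le G (SimpleGraph.Walk.cons hadj q)
              simpa [SimpleGraph.Walk.darts_cons] using this
  -- Step 3: conclude
  have hc : (0 : ℝ) ≤ (1 / ((d : ℝ) + 1)) * (1 / 4 : ℝ) ^ (L - 1) := by positivity
  have hsq : ((1 / ((d : ℝ) + 1)) * (1 / 4 : ℝ) ^ (L - 1)) ^ 2 ≤ (M i j) ^ 2 :=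
    pow_le_pow_left₀ hc hbound 2
  have hsum : (M i j) ^ 2 ≤ ∑ k, (M i k) ^ 2 :=
    Finset.single_le_sum (f := fun k => (M i k) ^ 2) (fun k _ => sq_nonneg _)
      (Finset.mem_univ j)
  refine le_trans (le_of_eq ?_) (hsq.trans hsum)
  have hdpos : (0:ℝ) < (d:ℝ) + 1 := by positivity
  have e1 : ((d:ℝ)+1) ^ (-2:ℤ) = (1/((d:ℝ)+1)) ^ 2 := by
    rw [_root_.zpow_neg, zpow_two]; field_simp
  have e2 : (4:ℝ) ^ (2 - 2*(L:ℤ)) = ((1/4:ℝ)^(L-1)) ^ 2 := by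
    rw [← pow_mul, one_div, inv_pow, ← zpow_natCast (4:ℝ), ← _root_.zpow_neg]
    congr 1; omega
  rw [e1, e2, mul_pow]
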